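/- Let P be the K-algebra generated by x₁, x₂, x₃ with relations x₂x₁ = q²x₁x₂, x₃x₁ = qx₁x₃, x₃x₂ = q^{-1}x₂x₃, where q ∈ K*. Then the elements c = x₃² - q x₁x₂ and d = x₁x₂ are normal in P (i.e. cP = Pc and dP = Pd). -/
import Mathlib

open FreeAlgebra

/-- In `P = K⟨x₁,x₂,x₃⟩/(x₂x₁ = q²x₁x₂, x₃x₁ = qx₁x₃, x₃x₂ = q⁻¹x₂x₃)`, the elements
`c = x₃² - q x₁x₂` and `d = x₁x₂` are normal, i.e. `cP = Pc` and `dP = Pd`. -/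
theorem stmt19 {K : Type*} [Field K] (q : K) (hq : q ≠ 0)
    (rel : FreeAlgebra K (Fin 3) → FreeAlgebra K (Fin 3) → Prop)
    (hrel : ∀ x y, rel x y ↔
      ((x = ι K 1 * ι K 0 ∧ y = (q ^ 2) • (ι K 0 * ι K 1)) ∨
       (x = ι K 2 * ι K 0 ∧ y = q • (ι K 0 * ι K 2)) ∨
       (x = ι K 2 * ι K 1 ∧ y = q⁻¹ • (ι K 1 * ι K 2)))) :
    let m := RingQuot.mkAlgHom K rel
    let c := m (ι K 2) * m (ι K 2) - q • (m (ι K 0) * m (ι K 1))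
    let d := m (ι K 0) * m (ι K 1)
    (∀ z : RingQuot rel, (∃ u, z = c * u) ↔ (∃ u, z = u * c)) ∧
    (∀ z : RingQuot rel, (∃ u, z = d * u) ↔ (∃ u, z = u * d)) := by
  intro m c d
  have hq2 : (q ^ 2 : K) ≠ 0 := pow_ne_zero _ hq
  set X0 := m (ι K 0) with hX0
  set X1 := m (ι K 1) with hX1
  set X2 := m (ι K 2) with hX2
  -- the three relations in the quotient
  have h10 : X1 * X0 = (q ^ 2) • (X0 * X1) := by
    have := RingQuot.mkAlgHom_rel K ((hrel _ _).2 (Or.inl ⟨rfl, rfl⟩))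
    simpa [m, map_mul, map_smul] using this
  have h20 : X2 * X0 = q • (X0 * X2) := by
    have := RingQuot.mkAlgHom_rel K ((hrel _ _).2 (Or.inr (Or.inl ⟨rfl, rfl⟩)))
    simpa [m, map_mul, map_smul] using this
  have h21 : X2 * X1 = q⁻¹ • (X1 * X2) := by
    have := RingQuot.mkAlgHom_rel K ((hrel _ _).2 (Or.inr (Or.inr ⟨rfl, rfl⟩)))
    simpa [m, map_mul, map_smul] using this
  have h10' : ∀ t, X1 * (X0 * t) = (q ^ 2) • (X0 * (X1 * t)) := by
    intro t; rw [← mul_assoc, h10, smul_mul_assoc, mul_assoc]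
  have h20' : ∀ t, X2 * (X0 * t) = q • (X0 * (X2 * t)) := by
    intro t; rw [← mul_assoc, h20, smul_mul_assoc, mul_assoc]
  have h21' : ∀ t, X2 * (X1 * t) = q⁻¹ • (X1 * (X2 * t)) := by
    intro t; rw [← mul_assoc, h21, smul_mul_assoc, mul_assoc]
  -- construct twisting endomorphism for scalars a (on X0) and a⁻¹ (on X1)
  have mkφ : ∀ a : K, a ≠ 0 →
      ∃ φ : RingQuot rel →ₐ[K] RingQuot rel,
        φ X0 = a • X0 ∧ φ X1 = a⁻¹ • X1 ∧ φ X2 = X2 := by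
    intro a ha
    set f : Fin 3 → RingQuot rel := ![a • X0, a⁻¹ • X1, X2] with hf
    have hlift : ∀ ⦃x y⦄, rel x y → FreeAlgebra.lift K f x = FreeAlgebra.lift K f y := by
      intro x y h
      rw [hrel] at h
      rcases h with ⟨rfl, rfl⟩ | ⟨rfl, rfl⟩ | ⟨rfl, rfl⟩
      · simp only [map_mul, map_smul, lift_ι_apply, hf, Matrix.cons_val_zero,
          Matrix.cons_val_one, Matrix.head_cons, Matrix.cons_val_two, Matrix.tail_cons,
          smul_mul_assoc, mul_smul_comm, smul_smul]
        rw [h10, smul_smul]; congr 1; field_simp; try ring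
      · simp only [map_mul, map_smul, lift_ι_apply, hf, Matrix.cons_val_zero,
          Matrix.cons_val_one, Matrix.head_cons, Matrix.cons_val_two, Matrix.tail_cons,
          smul_mul_assoc, mul_smul_comm, smul_smul]
        rw [h20, smul_smul]; congr 1; ring
      · simp only [map_mul, map_smul, lift_ι_apply, hf, Matrix.cons_val_zero,
          Matrix.cons_val_one, Matrix.head_cons, Matrix.cons_val_two, Matrix.tail_cons,
          smul_mul_assoc, mul_smul_comm, smul_smul]
        rw [h21, smul_smul]; congr 1; ring
    refine ⟨RingQuot.liftAlgHom K ⟨FreeAlgebra.lift K f, hlift⟩, ?_, ?_, ?_⟩ <;>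
      simp [hX0, hX1, hX2, m, RingQuot.liftAlgHom_mkAlgHom_apply, lift_ι_apply, hf]
  obtain ⟨φ, hφ0, hφ1, hφ2⟩ := mkφ (q ^ 2) hq2
  obtain ⟨ψ, hψ0, hψ1, hψ2⟩ := mkφ (q ^ 2)⁻¹ (inv_ne_zero hq2)
  rw [inv_inv] at hψ1
  -- key commuting lemmas by induction
  have key : ∀ (e : RingQuot rel) (χ : RingQuot rel →ₐ[K] RingQuot rel),
      (e * X0 = χ X0 * e) → (e * X1 = χ X1 * e) → (e * X2 = χ X2 * e) →
      ∀ z : RingQuot rel, e * z = χ z * e := by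
    intro e χ k0 k1 k2 z
    obtain ⟨z, rfl⟩ := RingQuot.mkAlgHom_surjective K rel z
    induction z using FreeAlgebra.induction with
    | grade0 r =>
        simp only [AlgHom.commutes]
        exact (Algebra.commutes r e).symm
    | grade1 i =>
        fin_cases i
        · exact k0
        · exact k1
        · exact k2
    | mul x y hx hy =>
        rw [map_mul, map_mul, ← mul_assoc, hx, mul_assoc, hy, ← mul_assoc]
    | add x y hx hy =>
        rw [map_add, map_add, mul_add, add_mul, hx, hy]
  have key' : ∀ (e : RingQuot rel) (χ : RingQuot rel →ₐ[K] RingQuot rel),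
      (X0 * e = e * χ X0) → (X1 * e = e * χ X1) → (X2 * e = e * χ X2) →
      ∀ z : RingQuot rel, z * e = e * χ z := by
    intro e χ k0 k1 k2 z
    obtain ⟨z, rfl⟩ := RingQuot.mkAlgHom_surjective K rel z
    induction z using FreeAlgebra.induction with
    | grade0 r =>
        simp only [AlgHom.commutes]
        exact Algebra.commutes r e
    | grade1 i =>
        fin_cases i
        · exact k0
        · exact k1
        · exact k2
    | mul x y hx hy =>
        rw [map_mul, map_mul, mul_assoc, hy, ← mul_assoc, hx, mul_assoc]
    | add x y hx hy =>
        rw [map_add, map_add, mul_add, add_mul, hx, hy]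
  -- generator identities for c
  have kc0 : c * X0 = (q ^ 2 • X0) * c := by
    show (X2 * X2 - q • (X0 * X1)) * X0 = (q ^ 2 • X0) * (X2 * X2 - q • (X0 * X1))
    simp only [sub_mul, mul_sub, smul_mul_assoc, mul_smul_comm, smul_smul, mul_assoc,
      h10, h20, h21, h10', h20', h21']
    all_goals match_scalars <;> field_simp <;> try ring
  have kc1 : c * X1 = ((q ^ 2)⁻¹ • X1) * c := by
    show (X2 * X2 - q • (X0 * X1)) * X1 = ((q ^ 2)⁻¹ • X1) * (X2 * X2 - q • (X0 * X1))
    simp only [sub_mul, mul_sub, smul_mul_assoc, mul_smul_comm, smul_smul, mul_assoc,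
      h10, h20, h21, h10', h20', h21']
    all_goals match_scalars <;> field_simp <;> try ring
  have kc2 : c * X2 = X2 * c := by
    show (X2 * X2 - q • (X0 * X1)) * X2 = X2 * (X2 * X2 - q • (X0 * X1))
    simp only [sub_mul, mul_sub, smul_mul_assoc, mul_smul_comm, smul_smul, mul_assoc,
      h10, h20, h21, h10', h20', h21']
    all_goals match_scalars <;> field_simp <;> try ring
  -- generator identities for d
  have kd0 : d * X0 = (q ^ 2 • X0) * d := by
    show (X0 * X1) * X0 = (q ^ 2 • X0) * (X0 * X1)
    simp only [smul_mul_assoc, mul_smul_comm, smul_smul, mul_assoc,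
      h10, h20, h21, h10', h20', h21']
    all_goals match_scalars <;> field_simp <;> try ring
  have kd1 : d * X1 = ((q ^ 2)⁻¹ • X1) * d := by
    show (X0 * X1) * X1 = ((q ^ 2)⁻¹ • X1) * (X0 * X1)
    simp only [smul_mul_assoc, mul_smul_comm, smul_smul, mul_assoc,
      h10, h20, h21, h10', h20', h21']
    all_goals match_scalars <;> field_simp <;> try ring
  have kd2 : d * X2 = X2 * d := by
    show (X0 * X1) * X2 = X2 * (X0 * X1)
    simp only [smul_mul_assoc, mul_smul_comm, smul_smul, mul_assoc,
      h10, h20, h21, h10', h20', h21']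
    all_goals match_scalars <;> field_simp <;> try ring
  -- reversed generator identities
  have rev : ∀ e : RingQuot rel, e * X0 = (q ^ 2 • X0) * e → X0 * e = e * ((q ^ 2)⁻¹ • X0) := by
    intro e h
    rw [mul_smul_comm, h, smul_mul_assoc, smul_smul, inv_mul_cancel₀ hq2, one_smul]
  have rev' : ∀ e : RingQuot rel, e * X1 = ((q ^ 2)⁻¹ • X1) * e → X1 * e = e * (q ^ 2 • X1) := by
    intro e h
    rw [mul_smul_comm, h, smul_mul_assoc, smul_smul, mul_inv_cancel₀ hq2, one_smul]
  -- assemble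
  have Hcφ : ∀ z, c * z = φ z * c :=
    key c φ (by rw [hφ0]; exact kc0) (by rw [hφ1]; exact kc1) (by rw [hφ2]; exact kc2)
  have Hcψ : ∀ z, z * c = c * ψ z :=
    key' c ψ (by rw [hψ0]; exact rev c kc0) (by rw [hψ1]; exact rev' c kc1)
      (by rw [hψ2]; exact kc2.symm)
  have Hdφ : ∀ z, d * z = φ z * d :=
    key d φ (by rw [hφ0]; exact kd0) (by rw [hφ1]; exact kd1) (by rw [hφ2]; exact kd2)
  have Hdψ : ∀ z, z * d = d * ψ z :=
    key' d ψ (by rw [hψ0]; exact rev d kd0) (by rw [hψ1]; exact rev' d kd1)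
      (by rw [hψ2]; exact kd2.symm)
  constructor
  · intro z
    constructor
    · rintro ⟨u, rfl⟩; exact ⟨φ u, Hcφ u⟩
    · rintro ⟨u, rfl⟩; exact ⟨ψ u, Hcψ u⟩
  · intro z
    constructor
    · rintro ⟨u, rfl⟩; exact ⟨φ u, Hdφ u⟩
    · rintro ⟨u, rfl⟩; exact ⟨ψ u, Hdψ u⟩
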